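/- Let N = l^n with integers l ≥ 2 and n ≥ 2. Then the constant 2l^{n−1}-tuple (l mod N, …, l mod N) of elements of ℤ/Nℤ, which is a solution of (E_N), is an irreducible solution of (E_N) if and only if l = 2. -/

import Mathlib

open Matrix

/-- `Mmat [a₁, …, aₙ]` is the product `[[aₙ,-1],[1,0]] ⋯ [[a₁,-1],[1,0]]`. -/
def Mmat {R : Type*} [CommRing R] : List R → Matrix (Fin 2) (Fin 2) R
  | [] => 1
  | a :: t => Mmat t * !![a, -1; 1, 0]

/-- A tuple is a solution of (E_N) if its matrix is `Id` or `-Id`. -/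
def IsSolution {R : Type*} [CommRing R] (l : List R) : Prop :=
  Mmat l = 1 ∨ Mmat l = -1

/-- The sum `(a₁,…,aₙ) ⊕ (b₁,…,bₘ) = (a₁+bₘ, a₂,…,aₙ₋₁, aₙ+b₁, b₂,…,bₘ₋₁)`. -/
def oplus {R : Type*} [CommRing R] (a b : List R) : List R :=
  List.ofFn (fun i : Fin (a.length + b.length - 2) =>
    if (i : ℕ) = 0 then a.getD 0 0 + b.getD (b.length - 1) 0
    else if (i : ℕ) < a.length - 1 then a.getD (i : ℕ) 0
    else if (i : ℕ) = a.length - 1 then a.getD (a.length - 1) 0 + b.getD 0 0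
    else b.getD ((i : ℕ) - a.length + 1) 0)

/-- Two tuples are equivalent if one is a cyclic permutation of the other or of
its reversal. -/
def TupleEquiv {R : Type*} (a b : List R) : Prop :=
  (∃ k, b = a.rotate k) ∨ (∃ k, b = a.reverse.rotate k)

/-- A solution `c` (of size ≥ 3) is reducible if `c ∼ a ⊕ b` with `b` a solution,
`a` of size ≥ 3 and `b` of size ≥ 3. -/
def Reducible {R : Type*} [CommRing R] (c : List R) : Prop :=
  ∃ a b : List R, 3 ≤ a.length ∧ 3 ≤ b.length ∧ IsSolution b ∧
    TupleEquiv c (oplus a b)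

/-- The alternating tuple `(k, -k, k, -k, …)` of length `n`. -/
def altList {R : Type*} [CommRing R] (n : ℕ) (k : R) : List R :=
  List.ofFn (fun i : Fin n => if (i : ℕ) % 2 = 0 then k else -k)

/-- Continuants: `K₋₁ = 0`, `K₀ = 1`,
`Kₙ(x₁,…,xₙ) = x₁·Kₙ₋₁(x₂,…,xₙ) - Kₙ₋₂(x₃,…,xₙ)`. -/
def contK {R : Type*} [CommRing R] : List R → R
  | [] => 1
  | [x] => x
  | x :: y :: t => x * contK (y :: t) - contK t

/-! ### Auxiliary lemmas -/

section Aux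

open Polynomial

lemma binom_aux {R : Type*} [CommRing R] (c : R) (l : ℕ) :
    ∃ w : R, (1 + c) ^ l = 1 + (l : R) * c + (l.choose 2 : R) * c ^ 2 + c ^ 3 * w := by
  induction l with
  | zero => exact ⟨0, by simp⟩
  | succ l ih =>
    obtain ⟨w, hw⟩ := ih
    refine ⟨(l.choose 2 : R) + w + w * c, ?_⟩
    have h : (l + 1).choose 2 = l + l.choose 2 := by
      rw [Nat.choose_succ_succ, Nat.choose_one_right]
    rw [pow_succ, hw, h]
    push_cast
    ring

lemma two_mul_choose_two (l : ℕ) : 2 * l.choose 2 = l * (l - 1) := by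
  rw [Nat.choose_two_right, Nat.mul_div_cancel' (Nat.even_mul_pred_self l).two_dvd]

lemma key_pow {R : Type*} [CommRing R] (l : ℕ) (x : R) (hx : x ^ 2 = l * x - 1) (k : ℕ) :
    ∃ y r : R, x ^ (2 * l ^ k) = (-1) ^ (l ^ k) * (1 + (l : R) ^ (k + 1) * y) ∧
      2 * y = l * r - 2 * x := by
  induction k with
  | zero =>
    exact ⟨-x, 0, by simpa using by rw [hx]; ring, by ring⟩
  | succ k ih =>
    obtain ⟨y, r, hy, hr⟩ := ih
    obtain ⟨w, hw⟩ := binom_aux ((l : R) ^ (k + 1) * y) l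
    have hC : (2 : R) * (l.choose 2 : R) = (l : R) * ((l - 1 : ℕ) : R) := by
      rw [← Nat.cast_ofNat, ← Nat.cast_mul, two_mul_choose_two, Nat.cast_mul]
    refine ⟨y + (l.choose 2 : R) * (l : R) ^ k * y ^ 2 + (l : R) ^ (2 * k + 1) * y ^ 3 * w,
      r + ((l - 1 : ℕ) : R) * (l : R) ^ k * y ^ 2 + 2 * (l : R) ^ (2 * k) * y ^ 3 * w, ?_, ?_⟩
    · have e1 : 2 * l ^ (k + 1) = (2 * l ^ k) * l := by ring
      rw [e1, pow_mul, hy, mul_pow, ← pow_mul, hw]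
      have e2 : l ^ k * l = l ^ (k + 1) := by ring
      rw [e2]
      ring
    · calc 2 * (y + (l.choose 2 : R) * (l : R) ^ k * y ^ 2 + (l : R) ^ (2 * k + 1) * y ^ 3 * w)
          = 2 * y + (2 * (l.choose 2 : R)) * (l : R) ^ k * y ^ 2
            + 2 * (l : R) ^ (2 * k + 1) * y ^ 3 * w := by ring
      _ = _ := by rw [hr, hC]; ring

lemma natCast_mat {A : Type*} [CommRing A] (m : ℕ) :
    ((m : ℕ) : Matrix (Fin 2) (Fin 2) A) = Matrix.scalar (Fin 2) (m : A) :=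
  (map_natCast (Matrix.scalar (Fin 2)) m).symm

lemma scalar_mul_mat {A : Type*} [CommRing A] (c : A) (B : Matrix (Fin 2) (Fin 2) A) :
    Matrix.scalar (Fin 2) c * B = c • B := by
  rw [scalar_apply, ← smul_eq_diagonal_mul]

lemma natCast_mul_eq_smul {A : Type*} [CommRing A] (m : ℕ) (B : Matrix (Fin 2) (Fin 2) A) :
    ((m : ℕ) : Matrix (Fin 2) (Fin 2) A) * B = (m : A) • B := by
  rw [natCast_mat, scalar_mul_mat]

lemma natCast_pow_mul_eq_smul {A : Type*} [CommRing A] (m j : ℕ)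
    (B : Matrix (Fin 2) (Fin 2) A) :
    (((m : ℕ) : Matrix (Fin 2) (Fin 2) A)) ^ j * B = ((m : A) ^ j) • B := by
  rw [← Nat.cast_pow, natCast_mul_eq_smul, Nat.cast_pow]

lemma two_mul_eq_smul {A : Type*} [CommRing A] (B : Matrix (Fin 2) (Fin 2) A) :
    (2 : Matrix (Fin 2) (Fin 2) A) * B = (2 : A) • B := by
  have := natCast_mul_eq_smul (A := A) 2 B
  push_cast at this
  exact this

lemma hM2 {A : Type*} [CommRing A] (l : A) :
    (!![l, -1; 1, 0] : Matrix (Fin 2) (Fin 2) A) ^ 2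
      = Matrix.scalar (Fin 2) l * !![l, -1; 1, 0] - 1 := by
  rw [pow_two, scalar_mul_mat]
  ext i j
  fin_cases i <;> fin_cases j <;> simp [mul_fin_two, one_fin_two] <;> ring

lemma key_pow_matrix {A : Type*} [CommRing A] (l : ℕ) (lz : A) (hlz : (l : A) = lz) (k : ℕ) :
    ∃ y r : Matrix (Fin 2) (Fin 2) A,
      (!![lz, -1; 1, 0] : Matrix (Fin 2) (Fin 2) A) ^ (2 * l ^ k)
        = (-1) ^ (l ^ k) * (1 + ((l : ℕ) : Matrix (Fin 2) (Fin 2) A) ^ (k + 1) * y) ∧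
      2 * y = ((l : ℕ) : Matrix (Fin 2) (Fin 2) A) * r - 2 * !![lz, -1; 1, 0] := by
  set Mm : Matrix (Fin 2) (Fin 2) A := !![lz, -1; 1, 0] with hMm
  set g : A[X] := X ^ 2 - C lz * X + 1 with hg
  set I : Ideal A[X] := Ideal.span {g} with hI
  set R := A[X] ⧸ I with hR
  have hx : (Ideal.Quotient.mk I X) ^ 2 = l * (Ideal.Quotient.mk I X) - 1 := by
    have h1 : (l : R) = Ideal.Quotient.mk I (C lz) := by
      rw [← map_natCast (Ideal.Quotient.mk I) l]
      congr 1
      rw [← hlz]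
      simp
    rw [h1, ← _root_.map_pow, ← _root_.map_one (Ideal.Quotient.mk I), ← _root_.map_mul,
      ← _root_.map_sub]
    rw [Ideal.Quotient.eq]
    have : (X ^ 2 - (C lz * X - 1) : A[X]) = g := by rw [hg]; ring
    rw [this]
    exact Ideal.subset_span rfl
  obtain ⟨y, r, h1, h2⟩ := key_pow l (Ideal.Quotient.mk I X) hx k
  have hgM : (aeval Mm : A[X] →ₐ[A] Matrix (Fin 2) (Fin 2) A) g = 0 := by
    rw [hg]
    simp only [map_add, map_sub, _root_.map_pow, _root_.map_mul, aeval_X, aeval_C, aeval_one]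
    have h2' := hM2 lz
    rw [← hMm] at h2'
    rw [h2']
    have : algebraMap A (Matrix (Fin 2) (Fin 2) A) lz = Matrix.scalar (Fin 2) lz := rfl
    rw [this]
    abel
  have hker : ∀ a ∈ I, (aeval Mm : A[X] →ₐ[A] Matrix (Fin 2) (Fin 2) A) a = 0 := by
    intro a ha
    rw [hI, Ideal.mem_span_singleton] at ha
    obtain ⟨b, rfl⟩ := ha
    rw [_root_.map_mul, hgM, zero_mul]
  set φ : R →+* Matrix (Fin 2) (Fin 2) A :=
    Ideal.Quotient.lift I (aeval Mm : A[X] →ₐ[A] Matrix (Fin 2) (Fin 2) A).toRingHom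
      (by intro a ha; exact hker a ha) with hφ
  have hφX : φ (Ideal.Quotient.mk I X) = Mm := by
    rw [hφ, Ideal.Quotient.lift_mk]
    simp
  refine ⟨φ y, φ r, ?_, ?_⟩
  · have h := congrArg φ h1
    simp only [_root_.map_pow, _root_.map_mul, map_neg, _root_.map_one, map_add, map_natCast,
      hφX] at h
    rw [map_natCast φ l] at h
    exact h
  · have h := congrArg φ h2
    simp only [_root_.map_mul, map_sub, map_natCast, map_ofNat, hφX] at h
    convert h using 2

lemma Mmat_append {R : Type*} [CommRing R] (u v : List R) :
    Mmat (u ++ v) = Mmat v * Mmat u := by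
  induction u with
  | nil => simp [Mmat]
  | cons a u ih => rw [List.cons_append, Mmat, Mmat, ih, mul_assoc]

lemma Mmat_replicate {R : Type*} [CommRing R] (k : ℕ) (c : R) :
    Mmat (List.replicate k c) = !![c, -1; 1, 0] ^ k := by
  induction k with
  | zero => rfl
  | succ k ih => rw [List.replicate_succ, Mmat, ih, ← pow_succ]

lemma Mmat_sandwich {R : Type*} [CommRing R] (x y : R) (mid : List R) :
    Mmat (x :: (mid ++ [y])) = !![y, -1; 1, 0] * Mmat mid * !![x, -1; 1, 0] := by
  rw [Mmat, Mmat_append]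
  norm_num [Mmat]

lemma conj_lemma {A : Type*} [CommRing A] (lc s : A) (hsl : s * lc = 0) (hs2 : s * s = 0) :
    !![s, -1; 1, 0] * ((1 : Matrix (Fin 2) (Fin 2) A) + s • !![lc, -1; 1, 0]) * !![s, -1; 1, 0]
      = -1 := by
  ext i j
  fin_cases i <;> fin_cases j <;>
    simp [mul_fin_two, one_fin_two, Matrix.mul_apply, Fin.sum_univ_two, mul_comm] <;>
    first
      | linear_combination s ^ 2 * hsl - hs2
      | linear_combination (-s) * hsl
      | linear_combination s * hsl
      | linear_combination hsl

lemma pow_formula_two {A : Type*} [CommRing A] (K : ℕ) :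
    (!![(2 : A), -1; 1, 0]) ^ K = !![(K : A) + 1, -(K : A); (K : A), 1 - (K : A)] := by
  induction K with
  | zero => simp [one_fin_two]
  | succ K ih =>
    rw [pow_succ, ih, mul_fin_two]
    congr 1 <;> push_cast <;> ring_nf

lemma oplus_length {R : Type*} [CommRing R] (a b : List R) :
    (oplus a b).length = a.length + b.length - 2 := by
  simp [oplus]

end Aux

section Aux2

lemma exists_good_power (l n : ℕ) (hl : 3 ≤ l) (hn : 2 ≤ n) :
    ∃ (kk e : ℕ) (s : ZMod (l ^ n)),
      kk + 4 ≤ 2 * l ^ (n - 1) ∧ 1 ≤ kk ∧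
      s * (l : ZMod (l ^ n)) = 0 ∧ s * s = 0 ∧
      (!![(l : ZMod (l ^ n)), -1; 1, 0]) ^ kk
        = (-1) ^ e * (1 + s • !![(l : ZMod (l ^ n)), -1; 1, 0]) := by
  set N := l ^ n with hN
  set lz : ZMod N := (l : ZMod N) with hlz
  set Mm : Matrix (Fin 2) (Fin 2) (ZMod N) := !![lz, -1; 1, 0] with hMm
  obtain ⟨y, r, hy, hr⟩ := key_pow_matrix l lz rfl (n - 2)
  have hn2 : n - 2 + 1 = n - 1 := by omega
  have hn1 : n - 1 + 1 = n := by omega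
  rw [hn2] at hy
  have hlzn : lz ^ n = 0 := by rw [hlz, ← Nat.cast_pow, ← hN, ZMod.natCast_self]
  have hl1 : l ^ (n - 2) ≥ 1 := Nat.one_le_pow _ _ (by omega)
  rw [natCast_pow_mul_eq_smul] at hy
  rw [← hlz] at hy
  have hr' : (2 : ZMod N) • y = lz • r - (2 : ZMod N) • Mm := by
    have h2 := two_mul_eq_smul y
    have h2' := two_mul_eq_smul Mm
    have hlr := natCast_mul_eq_smul l r
    rw [← hlz] at hlr
    rw [← h2, ← h2', ← hlr, hr]
  have hcancel : lz ^ (n - 1) • (lz • r) = 0 := by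
    rw [smul_smul, ← pow_succ, hn1, hlzn, zero_smul]
  have hls : lz ^ (n - 1) * lz = 0 := by rw [← pow_succ, hn1, hlzn]
  have hll : lz ^ (n - 1) * lz ^ (n - 1) = 0 := by
    have h2n : (n - 1) + (n - 1) = n + (n - 2) := by omega
    rw [← pow_add, h2n, pow_add, hlzn, zero_mul]
  rcases Nat.even_or_odd l with hpar | hpar
  · -- l even : kk = 4 * l^(n-2)
    refine ⟨4 * l ^ (n - 2), 0, -(2 * lz ^ (n - 1)), ?_, by omega, ?_, ?_, ?_⟩
    · have hEq : 2 * l ^ (n - 1) = 2 * l ^ (n - 2) * l := by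
        rw [mul_assoc, ← pow_succ, hn2]
      obtain ⟨l2, hl2⟩ := hpar
      have hl4 : 4 ≤ l := by omega
      calc 4 * l ^ (n - 2) + 4 ≤ 4 * l ^ (n - 2) + 4 * l ^ (n - 2) := by omega
        _ ≤ 2 * l ^ (n - 2) * l := by nlinarith
        _ = 2 * l ^ (n - 1) := hEq.symm
    · rw [neg_mul, mul_assoc, hls, mul_zero, neg_zero]
    · rw [neg_mul_neg, mul_mul_mul_comm, hll, mul_zero]
    · have h4 : 4 * l ^ (n - 2) = 2 * l ^ (n - 2) * 2 := by ring
      rw [h4, pow_mul, hy]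
      have hcomm : Commute ((-1 : Matrix (Fin 2) (Fin 2) (ZMod N)) ^ l ^ (n - 2))
          (1 + lz ^ (n - 1) • y) := (Commute.neg_one_left _).pow_left _
      rw [hcomm.mul_pow]
      have hneg : ((-1 : Matrix (Fin 2) (Fin 2) (ZMod N)) ^ l ^ (n - 2)) ^ 2 = 1 := by
        rw [← pow_mul, mul_comm, pow_mul, neg_one_sq, one_pow]
      rw [hneg, one_mul]
      have hsq : (1 + lz ^ (n - 1) • y) ^ 2
          = 1 + (2 : ZMod N) • (lz ^ (n - 1) • y) + (lz ^ (n - 1) • y) * (lz ^ (n - 1) • y) := by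
        rw [pow_two]
        simp only [mul_add, add_mul, mul_one, one_mul, two_smul]
        abel
      rw [hsq]
      have hz2 : (lz ^ (n - 1) • y) * (lz ^ (n - 1) • y) = 0 := by
        rw [smul_mul_smul_comm]
        have h2n : (n - 1) + (n - 1) = n + (n - 2) := by omega
        rw [← pow_add, h2n, pow_add, hlzn, zero_mul, zero_smul]
      have hz1 : (2 : ZMod N) • (lz ^ (n - 1) • y) = -((2 * lz ^ (n - 1)) • Mm) := by
        rw [smul_comm, hr', smul_sub, hcancel, zero_sub, smul_smul]
        congr 2
        ring
      rw [hz1, hz2, add_zero, pow_zero, one_mul, neg_smul]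
  · -- l odd : kk = 2 * l^(n-2)
    have hu : IsUnit (2 : ZMod N) := by
      have h22 : ((2 : ℕ) : ZMod N) = 2 := by push_cast; rfl
      rw [← h22, ZMod.isUnit_iff_coprime]
      exact Nat.Coprime.pow_right _ (Nat.coprime_two_left.mpr hpar)
    refine ⟨2 * l ^ (n - 2), l ^ (n - 2), -(lz ^ (n - 1)), ?_, by omega, ?_, ?_, ?_⟩
    · have h1 : 2 * l ^ (n - 1) = 2 * l ^ (n - 2) * l := by
        rw [mul_assoc, ← pow_succ, hn2]
      nlinarith [hl1]
    · rw [neg_mul, hls, neg_zero]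
    · rw [neg_mul_neg, hll]
    · rw [hy]
      congr 1
      congr 1
      have h0 : (2 : ZMod N) • (lz ^ (n - 1) • y + lz ^ (n - 1) • Mm) = 0 := by
        rw [smul_add, smul_comm, hr', smul_sub, hcancel, zero_sub, smul_comm (lz ^ (n - 1))]
        abel
      obtain ⟨u, hu2⟩ := hu
      have h3 := congrArg (fun X => (↑u⁻¹ : ZMod N) • X) h0
      simp only [smul_smul, smul_zero] at h3
      rw [← hu2, Units.inv_mul, one_smul] at h3
      have heq : lz ^ (n - 1) • y = -(lz ^ (n - 1) • Mm) := by
        rw [← add_eq_zero_iff_eq_neg]; exact h3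
      rw [heq, neg_smul]

end Aux2

section Lists

lemma sandwich_getElem {α : Type*} (c d z : α) (t j : ℕ) (hj : j < t + 2) :
    (c :: (List.replicate t z ++ [d]))[j]'(by simp; omega) =
      if j = 0 then c else if j ≤ t then z else d := by
  rw [List.getElem_cons]
  split_ifs with h0 h1
  · rfl
  · rw [List.getElem_append, dif_pos (by simp; omega)]
    exact List.getElem_replicate _
  · rw [List.getElem_append, dif_neg (by simp; omega)]
    exact List.getElem_singleton _

lemma sandwich_getD {α : Type*} (c d z e : α) (t j : ℕ) (hj : j < t + 2) :
    (c :: (List.replicate t z ++ [d])).getD j e =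
      if j = 0 then c else if j ≤ t then z else d := by
  rw [List.getD_eq_getElem _ _ (by simp; omega)]
  exact sandwich_getElem c d z t j hj

lemma oplus_sandwich {R : Type*} [CommRing R] (lz s : R) (p kk : ℕ)
    (hp : 4 ≤ p) (hk : 1 ≤ kk) :
    oplus ((lz - s) :: (List.replicate (p - 2) lz ++ [lz - s]))
      (s :: (List.replicate kk lz ++ [s])) = List.replicate (p + kk) lz := by
  have ha : ((lz - s) :: (List.replicate (p - 2) lz ++ [lz - s])).length = p := by
    simp; omega
  have hb : (s :: (List.replicate kk lz ++ [s])).length = kk + 2 := by simp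
  apply List.ext_getElem
  · rw [oplus_length, ha, hb, List.length_replicate]; omega
  · intro i h1 h2
    rw [List.getElem_replicate]
    simp only [oplus, List.getElem_ofFn]
    simp only [ha, hb]
    rw [oplus_length, ha, hb] at h1
    split_ifs with c0 c1 c2
    · -- i = 0
      rw [sandwich_getD _ _ _ _ _ _ (by omega), sandwich_getD _ _ _ _ _ _ (by omega)]
      rw [if_pos rfl, if_neg (by omega), if_neg (by omega)]
      ring
    · -- 0 < i < p - 1
      rw [sandwich_getD _ _ _ _ _ _ (by omega)]
      rw [if_neg (by omega), if_pos (by omega)]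
    · -- i = p - 1
      rw [sandwich_getD _ _ _ _ _ _ (by omega), sandwich_getD _ _ _ _ _ _ (by omega)]
      rw [if_neg (by omega), if_neg (by omega), if_pos rfl]
      ring
    · -- p - 1 < i
      rw [sandwich_getD _ _ _ _ _ _ (by omega)]
      rw [if_neg (by omega), if_pos (by omega)]

end Lists

lemma reducible_of_ge_three (l n : ℕ) (hl : 3 ≤ l) (hn : 2 ≤ n) :
    Reducible (List.replicate (2 * l ^ (n - 1)) ((l : ℕ) : ZMod (l ^ n))) := by
  obtain ⟨kk, e, s, hkk4, hkk1, hs1, hs2, hMk⟩ := exists_good_power l n hl hn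
  have hp4 : 4 ≤ 2 * l ^ (n - 1) - kk := by omega
  have hpk : (2 * l ^ (n - 1) - kk) + kk = 2 * l ^ (n - 1) := by omega
  refine ⟨((l : ZMod (l ^ n)) - s) ::
      (List.replicate (2 * l ^ (n - 1) - kk - 2) ((l : ℕ) : ZMod (l ^ n))
        ++ [(l : ZMod (l ^ n)) - s]),
      s :: (List.replicate kk ((l : ℕ) : ZMod (l ^ n)) ++ [s]), ?_, ?_, ?_, ?_⟩
  · simp; omega
  · simp; omega
  · -- IsSolution of b
    have hb : Mmat (s :: (List.replicate kk ((l : ℕ) : ZMod (l ^ n)) ++ [s]))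
        = !![s, -1; 1, 0] * (!![((l : ℕ) : ZMod (l ^ n)), -1; 1, 0] ^ kk) * !![s, -1; 1, 0] := by
      rw [Mmat_sandwich, Mmat_replicate]
    have hcm : Commute ((-1 : Matrix (Fin 2) (Fin 2) (ZMod (l ^ n))) ^ e) (!![s, -1; 1, 0]) :=
      (Commute.neg_one_left _).pow_left e
    have hmain : Mmat (s :: (List.replicate kk ((l : ℕ) : ZMod (l ^ n)) ++ [s]))
        = (-1 : Matrix (Fin 2) (Fin 2) (ZMod (l ^ n))) ^ e * (-1) := by
      rw [hb, hMk, ← mul_assoc, ← hcm.eq, mul_assoc, mul_assoc,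
        ← mul_assoc (!![s, -1; 1, 0]), conj_lemma ((l : ℕ) : ZMod (l ^ n)) s hs1 hs2]
    rcases Nat.even_or_odd e with he | he
    · right
      rw [hmain, he.neg_one_pow, one_mul]
    · left
      rw [hmain, he.neg_one_pow, neg_one_mul, neg_neg]
  · left
    refine ⟨0, ?_⟩
    rw [List.rotate_zero,
      oplus_sandwich ((l : ℕ) : ZMod (l ^ n)) s (2 * l ^ (n - 1) - kk) kk hp4 hkk1, hpk]

lemma not_reducible_two (n : ℕ) (hn : 2 ≤ n) :
    ¬ Reducible (List.replicate (2 * 2 ^ (n - 1)) ((2 : ℕ) : ZMod (2 ^ n))) := by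
  rintro ⟨a, b, ha3, hb3, hbsol, heq⟩
  have hN4 : 4 ≤ 2 ^ n := by
    calc 4 = 2 ^ 2 := rfl
    _ ≤ 2 ^ n := Nat.pow_le_pow_right (by norm_num) hn
  have hm : 2 * 2 ^ (n - 1) = 2 ^ n := by
    rw [← pow_succ']
    congr 1
    omega
  have hoplus : oplus a b = List.replicate (2 * 2 ^ (n - 1)) ((2 : ℕ) : ZMod (2 ^ n)) := by
    rcases heq with ⟨k, hk⟩ | ⟨k, hk⟩
    · rw [hk, List.rotate_replicate]
    · rw [hk, List.reverse_replicate, List.rotate_replicate]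
  have hlen : a.length + b.length - 2 = 2 * 2 ^ (n - 1) := by
    have h := congrArg List.length hoplus
    rw [oplus_length, List.length_replicate] at h
    exact h
  have hqN : b.length ≤ 2 ^ n - 1 := by omega
  have hmid : ∀ j, 1 ≤ j → j ≤ b.length - 2 → b.getD j 0 = ((2 : ℕ) : ZMod (2 ^ n)) := by
    intro j hj1 hj2
    have hidx : a.length - 1 + j < (oplus a b).length := by rw [oplus_length]; omega
    have h : (oplus a b)[a.length - 1 + j]'hidx = ((2 : ℕ) : ZMod (2 ^ n)) := by
      rw [List.getElem_of_eq hoplus hidx, List.getElem_replicate]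
    simp only [oplus, List.getElem_ofFn] at h
    rw [if_neg (by omega), if_neg (by omega), if_neg (by omega)] at h
    rw [show a.length - 1 + j - a.length + 1 = j from by omega] at h
    exact h
  have hbform : b = (b.getD 0 0) ::
      (List.replicate (b.length - 2) ((2 : ℕ) : ZMod (2 ^ n)) ++ [b.getD (b.length - 1) 0]) := by
    apply List.ext_getElem
    · simp
      omega
    · intro i hi1 hi2
      rw [sandwich_getElem _ _ _ _ _ (by omega)]
      split_ifs with h0 h1
      · subst h0
        exact (List.getD_eq_getElem _ _ (by omega)).symm
      · rw [← List.getD_eq_getElem _ (0 : ZMod (2 ^ n)) (by omega)]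
        exact hmid i (by omega) h1
      · have hieq : i = b.length - 1 := by omega
        subst hieq
        exact (List.getD_eq_getElem _ _ (by omega)).symm
  unfold IsSolution at hbsol
  rw [hbform, Mmat_sandwich, Mmat_replicate] at hbsol
  have h2z : ((2 : ℕ) : ZMod (2 ^ n)) = (2 : ZMod (2 ^ n)) := by push_cast; rfl
  rw [h2z, pow_formula_two (b.length - 2)] at hbsol
  rw [mul_fin_two, mul_fin_two] at hbsol
  have hq0 : 0 < b.length := by omega
  rcases hbsol with h | h
  · have h11 := congrArg (fun M : Matrix (Fin 2) (Fin 2) (ZMod (2 ^ n)) => M 1 1) h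
    simp [one_fin_two] at h11
    have hq : ((b.length : ℕ) : ZMod (2 ^ n)) = 0 := by
      have hqe : ((b.length - 2) + 2 : ℕ) = b.length := by omega
      rw [← hqe]
      push_cast
      linear_combination -h11
    rw [ZMod.natCast_eq_zero_iff] at hq
    have := Nat.le_of_dvd hq0 hq
    omega
  · have h11 := congrArg (fun M : Matrix (Fin 2) (Fin 2) (ZMod (2 ^ n)) => M 1 1) h
    simp [one_fin_two] at h11
    have hq : ((b.length - 2 : ℕ) : ZMod (2 ^ n)) = 0 := by
      linear_combination h11
    rw [ZMod.natCast_eq_zero_iff] at hq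
    have := Nat.le_of_dvd (by omega) hq
    omega

theorem replicate_l_pow_irreducible_iff (l n : ℕ) (hl : 2 ≤ l) (hn : 2 ≤ n) :
    IsSolution (List.replicate (2 * l ^ (n - 1)) ((l : ℕ) : ZMod (l ^ n))) ∧
    (¬ Reducible (List.replicate (2 * l ^ (n - 1)) ((l : ℕ) : ZMod (l ^ n))) ↔ l = 2) := by
  constructor
  · obtain ⟨y, r, hy, hr⟩ := key_pow_matrix l ((l : ℕ) : ZMod (l ^ n)) rfl (n - 1)
    rw [show n - 1 + 1 = n from by omega] at hy
    have hLn : ((l : ℕ) : Matrix (Fin 2) (Fin 2) (ZMod (l ^ n))) ^ n = 0 := by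
      rw [← Nat.cast_pow, natCast_mat, ZMod.natCast_self, map_zero]
    unfold IsSolution
    rw [Mmat_replicate, hy, hLn, zero_mul, add_zero, mul_one]
    rcases Nat.even_or_odd (l ^ (n - 1)) with he | he
    · exact Or.inl he.neg_one_pow
    · exact Or.inr he.neg_one_pow
  · constructor
    · intro hirr
      by_contra hne
      exact hirr (reducible_of_ge_three l n (by omega) hn)
    · intro h2
      subst h2
      exact not_reducible_two n hn
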